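/- Let V be a finite-dimensional complex inner product space and D_x, D_y mutually adjoint endomorphisms with D_x² = D_y² = 0, and D = D_x + D_y. Then im(D_x) + im(D_y) = im(D) = im(D²), and V decomposes as the orthogonal direct sum V = ker(D²) ⊕ im(D_x) ⊕ im(D_y). -/
import Mathlib


open scoped ComplexInnerProductSpace

/-- images identity and orthogonal decomposition
`V = ker(D²) ⊕ im Dx ⊕ im Dy`. -/
theorem stmt3 (V : Type*) [NormedAddCommGroup V] [InnerProductSpace ℂ V]
    [FiniteDimensional ℂ V]
    (Dx Dy : V →ₗ[ℂ] V)
    (hadj : ∀ v w : V, ⟪Dx v, w⟫ = ⟪v, Dy w⟫)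
    (hx2 : Dx ∘ₗ Dx = 0) (hy2 : Dy ∘ₗ Dy = 0)
    (D : V →ₗ[ℂ] V) (hD : D = Dx + Dy) :
    LinearMap.range Dx ⊔ LinearMap.range Dy = LinearMap.range D ∧
    LinearMap.range D = LinearMap.range (D ∘ₗ D) ∧
    (∀ v ∈ LinearMap.ker (D ∘ₗ D), ∀ w ∈ LinearMap.range Dx, ⟪v, w⟫ = 0) ∧
    (∀ v ∈ LinearMap.ker (D ∘ₗ D), ∀ w ∈ LinearMap.range Dy, ⟪v, w⟫ = 0) ∧
    (∀ v ∈ LinearMap.range Dx, ∀ w ∈ LinearMap.range Dy, ⟪v, w⟫ = 0) ∧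
    LinearMap.ker (D ∘ₗ D) ⊔ LinearMap.range Dx ⊔ LinearMap.range Dy = ⊤ := by
  have hx2' : ∀ v, Dx (Dx v) = 0 := fun v => by simpa using LinearMap.congr_fun hx2 v
  have hy2' : ∀ v, Dy (Dy v) = 0 := fun v => by simpa using LinearMap.congr_fun hy2 v
  have hadj' : ∀ v w : V, ⟪Dy v, w⟫ = ⟪v, Dx w⟫ := by
    intro v w
    calc ⟪Dy v, w⟫ = starRingEnd ℂ ⟪w, Dy v⟫ := (inner_conj_symm _ _).symm
    _ = starRingEnd ℂ ⟪Dx w, v⟫ := by rw [hadj]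
    _ = ⟪v, Dx w⟫ := inner_conj_symm _ _
  have hDv : ∀ v, D v = Dx v + Dy v := fun v => by simp [hD]
  -- elements of ker D² are killed by Dx and Dy
  have hzero : ∀ v, D (D v) = 0 → Dx v = 0 ∧ Dy v = 0 := by
    intro v h
    have h1 : Dx (Dy v) + Dy (Dx v) = 0 := by
      have h' := h
      rw [hDv, hDv] at h'
      rw [map_add, map_add, hx2', hy2'] at h'
      rw [← h']
      abel
    have h2 : ⟪Dx (Dy v), v⟫ + ⟪Dy (Dx v), v⟫ = 0 := by
      rw [← inner_add_left, h1, inner_zero_left]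
    rw [hadj (Dy v) v, hadj' (Dx v) v] at h2
    rw [inner_self_eq_norm_sq_to_K, inner_self_eq_norm_sq_to_K] at h2
    norm_cast at h2
    rw [RCLike.ofReal_eq_zero] at h2
    have h4 : ‖Dx v‖ = 0 := by nlinarith [h2, sq_nonneg ‖Dx v‖, sq_nonneg ‖Dy v‖]
    have h5 : ‖Dy v‖ = 0 := by nlinarith [h2, sq_nonneg ‖Dx v‖, sq_nonneg ‖Dy v‖]
    exact ⟨norm_eq_zero.mp h4, norm_eq_zero.mp h5⟩
  have hkk : LinearMap.ker (D ∘ₗ D) = LinearMap.ker D := by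
    ext v
    simp only [LinearMap.mem_ker, LinearMap.comp_apply]
    constructor
    · intro h
      obtain ⟨a, b⟩ := hzero v h
      rw [hDv, a, b, add_zero]
    · intro h; rw [h, map_zero]
  -- orthogonality statements
  have c3 : ∀ v ∈ LinearMap.ker (D ∘ₗ D), ∀ w ∈ LinearMap.range Dx, ⟪v, w⟫ = 0 := by
    rintro v hv w ⟨u, rfl⟩
    obtain ⟨a, b⟩ := hzero v (by simpa [LinearMap.mem_ker] using hv)
    rw [← hadj', b, inner_zero_left]
  have c4 : ∀ v ∈ LinearMap.ker (D ∘ₗ D), ∀ w ∈ LinearMap.range Dy, ⟪v, w⟫ = 0 := by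
    rintro v hv w ⟨u, rfl⟩
    obtain ⟨a, b⟩ := hzero v (by simpa [LinearMap.mem_ker] using hv)
    rw [← hadj, a, inner_zero_left]
  have c5 : ∀ v ∈ LinearMap.range Dx, ∀ w ∈ LinearMap.range Dy, ⟪v, w⟫ = 0 := by
    rintro v ⟨a, rfl⟩ w ⟨b, rfl⟩
    rw [hadj, hy2', inner_zero_right]
  -- the sup is everything
  set K := LinearMap.ker (D ∘ₗ D) with hK
  set S := K ⊔ LinearMap.range Dx ⊔ LinearMap.range Dy with hS
  have hxS : LinearMap.range Dx ≤ S := le_trans le_sup_right le_sup_left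
  have hyS : LinearMap.range Dy ≤ S := le_sup_right
  have hKS : K ≤ S := le_trans le_sup_left le_sup_left
  have hSbot : Sᗮ = ⊥ := by
    rw [Submodule.eq_bot_iff]
    intro v hv
    have hOv : ∀ u ∈ S, ⟪u, v⟫ = 0 := (Submodule.mem_orthogonal S v).mp hv
    have hdy : Dy v = 0 := by
      have h := hOv (Dx (Dy v)) (hxS ⟨Dy v, rfl⟩)
      rw [hadj] at h
      exact inner_self_eq_zero.mp h
    have hdx : Dx v = 0 := by
      have h := hOv (Dy (Dx v)) (hyS ⟨Dx v, rfl⟩)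
      rw [hadj'] at h
      exact inner_self_eq_zero.mp h
    have hvK : v ∈ K := by
      have hDv0 : D v = 0 := by rw [hDv, hdx, hdy, add_zero]
      exact LinearMap.mem_ker.mpr (by rw [LinearMap.comp_apply, hDv0, map_zero])
    exact inner_self_eq_zero.mp (hOv v (hKS hvK))
  have c6 : S = ⊤ := Submodule.orthogonal_eq_bot_iff.mp hSbot
  -- images
  set W := LinearMap.range Dx ⊔ LinearMap.range Dy with hW
  have hWK : W ≤ Kᗮ := by
    apply sup_le
    · rintro w ⟨u, rfl⟩
      exact (Submodule.mem_orthogonal K _).mpr fun x hx => c3 x hx _ ⟨u, rfl⟩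
    · rintro w ⟨u, rfl⟩
      exact (Submodule.mem_orthogonal K _).mpr fun x hx => c4 x hx _ ⟨u, rfl⟩
  have hinf : K ⊓ W = ⊥ := by
    apply le_bot_iff.mp
    calc K ⊓ W ≤ K ⊓ Kᗮ := inf_le_inf_left K hWK
    _ = ⊥ := Submodule.inf_orthogonal_eq_bot K
  have hsup : K ⊔ W = ⊤ := by
    rw [hW, ← sup_assoc]
    exact c6
  have hrank := Submodule.finrank_sup_add_finrank_inf_eq K W
  rw [hsup, hinf, finrank_bot, finrank_top] at hrank
  have hrn := LinearMap.finrank_range_add_finrank_ker D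
  have hrn2 := LinearMap.finrank_range_add_finrank_ker (D ∘ₗ D)
  rw [← hkk] at hrn
  have hrn2' : Module.finrank ℂ ↥(LinearMap.range (D ∘ₗ D)) + Module.finrank ℂ ↥K =
      Module.finrank ℂ V := hrn2
  have hle : LinearMap.range D ≤ W := by
    rintro w ⟨u, rfl⟩
    rw [hDv]
    exact Submodule.add_mem_sup ⟨u, rfl⟩ ⟨u, rfl⟩
  have c1 : W = LinearMap.range D := by
    refine (Submodule.eq_of_le_of_finrank_le hle ?_).symm
    omega
  have hle2 : LinearMap.range (D ∘ₗ D) ≤ LinearMap.range D := by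
    rintro w ⟨u, rfl⟩
    exact ⟨D u, rfl⟩
  have c2 : LinearMap.range D = LinearMap.range (D ∘ₗ D) := by
    refine (Submodule.eq_of_le_of_finrank_le hle2 ?_).symm
    omega
  exact ⟨c1, c2, c3, c4, c5, c6⟩
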